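/- Let G be a group. If A ⊆ G is piecewise syndetic and A = C_0 ∪ C_1 ∪ … ∪ C_r, then some C_i is piecewise syndetic. -/
import Mathlib


/-- A set `T ⊆ G` is (right) thick if for every finite `F ⊆ G` there is `t ∈ T`
with `F·t ⊆ T`. -/
def RightThick {G : Type*} [Group G] (T : Set G) : Prop :=
  ∀ F : Finset G, ∃ t ∈ T, ∀ f ∈ F, f * t ∈ T

/-- A set `S ⊆ G` is (left) syndetic if there is a finite `F ⊆ G` with `F⁻¹·S = G`. -/
def LeftSyndetic {G : Type*} [Group G] (S : Set G) : Prop :=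
  ∃ F : Finset G, ∀ g : G, ∃ f ∈ F, f * g ∈ S

/-- A set is piecewise syndetic if it is the intersection of a syndetic set and a
thick set. -/
def PiecewiseSyndetic {G : Type*} [Group G] (A : Set G) : Prop :=
  ∃ S T : Set G, LeftSyndetic S ∧ RightThick T ∧ A = S ∩ T

namespace PWSaux

variable {G : Type*} [Group G]

attribute [local instance] Classical.decEq

open scoped Pointwise

/-- `pre F A = F⁻¹ · A`. -/
def pre (F : Finset G) (A : Set G) : Set G := {g | ∃ f ∈ F, f * g ∈ A}

/-- Alternative characterization of piecewise syndeticity. -/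
def PS' (A : Set G) : Prop := ∃ F : Finset G, RightThick (pre F A)

lemma thick_mono {T T' : Set G} (h : T ⊆ T') (hT : RightThick T) : RightThick T' := by
  intro F
  obtain ⟨t, ht, hft⟩ := hT F
  exact ⟨t, h ht, fun f hf => h (hft f hf)⟩

lemma ps'_of_thick {A : Set G} (h : RightThick A) : PS' A := by
  refine ⟨{1}, thick_mono ?_ h⟩
  intro g hg
  exact ⟨1, Finset.mem_singleton_self 1, by rwa [one_mul]⟩

lemma ps'_pre {F : Finset G} {A : Set G} (h : PS' (pre F A)) : PS' A := by
  obtain ⟨E, hE⟩ := h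
  refine ⟨F * E, thick_mono ?_ hE⟩
  rintro g ⟨e, he, f, hf, hfe⟩
  exact ⟨f * e, Finset.mul_mem_mul hf he, by rwa [mul_assoc]⟩

/-- Key lemma: if `A ∪ B` is thick and `B` is not thick, then `A` is PS'. -/
lemma key {A B : Set G} (hT : RightThick (A ∪ B)) (hB : ¬ RightThick B) : PS' A := by
  rw [RightThick] at hB
  push_neg at hB
  obtain ⟨F, hF⟩ := hB
  have hH : ∀ t : G, ∃ h ∈ insert (1 : G) F, h * t ∉ B := by
    intro t
    by_cases ht : t ∈ B
    · obtain ⟨f, hf, hfb⟩ := hF t ht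
      exact ⟨f, Finset.mem_insert_of_mem hf, hfb⟩
    · exact ⟨1, Finset.mem_insert_self _ _, by rwa [one_mul]⟩
  refine ⟨insert (1 : G) F, ?_⟩
  intro E
  obtain ⟨t, _ht, hft⟩ := hT (insert (1 : G) F * insert 1 E)
  have main : ∀ e ∈ insert (1 : G) E, e * t ∈ pre (insert (1 : G) F) A := by
    intro e he
    obtain ⟨h, hh, hhB⟩ := hH (e * t)
    have hmem : h * (e * t) ∈ A ∪ B := by
      have := hft (h * e) (Finset.mul_mem_mul hh he)
      rwa [mul_assoc] at this
    rcases hmem with hA | hB2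
    · exact ⟨h, hh, hA⟩
    · exact absurd hB2 hhB
  refine ⟨t, ?_, fun e he => main e (Finset.mem_insert_of_mem he)⟩
  have := main 1 (Finset.mem_insert_self _ _)
  rwa [one_mul] at this

lemma ps'_of_ps {A : Set G} (h : PiecewiseSyndetic A) : PS' A := by
  obtain ⟨S, T, ⟨F, hF⟩, hT, rfl⟩ := h
  refine ⟨F, ?_⟩
  intro E
  obtain ⟨t, _ht, hft⟩ := hT (F * insert 1 E)
  have main : ∀ e ∈ insert (1 : G) E, e * t ∈ pre F (S ∩ T) := by
    intro e he
    obtain ⟨f, hf, hfs⟩ := hF (e * t)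
    refine ⟨f, hf, hfs, ?_⟩
    have := hft (f * e) (Finset.mul_mem_mul hf he)
    rwa [mul_assoc] at this
  refine ⟨t, ?_, fun e he => main e (Finset.mem_insert_of_mem he)⟩
  have := main 1 (Finset.mem_insert_self _ _)
  rwa [one_mul] at this

lemma ps_of_ps' {A : Set G} (h : PS' A) : PiecewiseSyndetic A := by
  obtain ⟨F, hF⟩ := h
  refine ⟨A ∪ (pre F A)ᶜ, A ∪ pre F A, ?_,
    thick_mono Set.subset_union_right hF, ?_⟩
  · refine ⟨insert 1 F, fun g => ?_⟩
    by_cases hg : g ∈ pre F A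
    · obtain ⟨f, hf, hfa⟩ := hg
      exact ⟨f, Finset.mem_insert_of_mem hf, Or.inl hfa⟩
    · exact ⟨1, Finset.mem_insert_self _ _, by rw [one_mul]; exact Or.inr hg⟩
  · ext x
    simp only [Set.mem_inter_iff, Set.mem_union, Set.mem_compl_iff]
    tauto

lemma union_fin : ∀ n : ℕ, ∀ C : Fin (n + 1) → Set G,
    RightThick (⋃ i, C i) → ∃ i, PS' (C i) := by
  intro n
  induction n with
  | zero =>
    intro C hC
    refine ⟨0, ps'_of_thick (thick_mono ?_ hC)⟩
    intro x hx
    obtain ⟨_, ⟨i, rfl⟩, hxi⟩ := hx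
    have : i = 0 := Fin.fin_one_eq_zero i
    rwa [this] at hxi
  | succ m ih =>
    intro C hC
    by_cases hlast : RightThick (C (Fin.last (m + 1)))
    · exact ⟨Fin.last _, ps'_of_thick hlast⟩
    · have hsplit : (⋃ i, C i) =
          (⋃ i : Fin (m + 1), C i.castSucc) ∪ C (Fin.last (m + 1)) := by
        ext x
        simp only [Set.mem_iUnion, Set.mem_union]
        constructor
        · rintro ⟨i, hi⟩
          rcases Fin.eq_castSucc_or_eq_last i with ⟨j, rfl⟩ | rfl
          · exact Or.inl ⟨j, hi⟩
          · exact Or.inr hi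
        · rintro (⟨j, hj⟩ | h)
          · exact ⟨j.castSucc, hj⟩
          · exact ⟨_, h⟩
      rw [hsplit] at hC
      obtain ⟨F, hF⟩ := key hC hlast
      have hpre : pre F (⋃ i : Fin (m + 1), C i.castSucc) =
          ⋃ i : Fin (m + 1), pre F (C i.castSucc) := by
        ext g
        simp only [pre, Set.mem_setOf_eq, Set.mem_iUnion]
        constructor
        · rintro ⟨f, hf, i, hi⟩
          exact ⟨i, f, hf, hi⟩
        · rintro ⟨i, f, hf, hi⟩
          exact ⟨f, hf, i, hi⟩
      rw [hpre] at hF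
      obtain ⟨i, hi⟩ := ih (fun i => pre F (C i.castSucc)) hF
      exact ⟨i.castSucc, ps'_pre hi⟩

end PWSaux

theorem piecewiseSyndetic_partition_regular {G : Type*} [Group G] (A : Set G)
    (hA : PiecewiseSyndetic A) (r : ℕ) (C : Fin (r + 1) → Set G)
    (hC : A = ⋃ i, C i) :
    ∃ i : Fin (r + 1), PiecewiseSyndetic (C i) := by
  obtain ⟨F, hF⟩ := PWSaux.ps'_of_ps hA
  have heq : PWSaux.pre F A = ⋃ i, PWSaux.pre F (C i) := by
    rw [hC]
    ext g
    simp only [PWSaux.pre, Set.mem_setOf_eq, Set.mem_iUnion]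
    constructor
    · rintro ⟨f, hf, i, hi⟩
      exact ⟨i, f, hf, hi⟩
    · rintro ⟨i, f, hf, hi⟩
      exact ⟨f, hf, i, hi⟩
  rw [heq] at hF
  obtain ⟨i, hi⟩ := PWSaux.union_fin r _ hF
  exact ⟨i, PWSaux.ps_of_ps' (PWSaux.ps'_pre hi)⟩
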